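/- Let (f_n) be a sequence of holomorphic self-maps of the open unit disc D and let a, b be distinct points of D. If the series Σ_n ρ(f_n(a), a) and Σ_n ρ(f_n(b), b) both converge, then for every z in D the series Σ_n ρ(f_n(z), z) converges. -/

import Mathlib

open Complex Metric Set

/-- The hyperbolic metric on the open unit disc:
`ρ(u,v) = 2 · arsinh (|u − v| / √((1 − |u|²)(1 − |v|²)))`. -/
noncomputable def rho (u v : ℂ) : ℝ :=
  2 * Real.arsinh (‖u - v‖ /
    Real.sqrt ((1 - ‖u‖ ^ 2) * (1 - ‖v‖ ^ 2)))

noncomputable def Complex.abs : AbsoluteValue ℂ ℝ where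
  toFun := fun z => ‖z‖
  map_mul' := norm_mul
  nonneg' := norm_nonneg
  eq_zero' := fun _ => norm_eq_zero
  add_le' := norm_add_le

@[simp] lemma Complex.norm_eq_abs (z : ℂ) : ‖z‖ = Complex.abs z := rfl

@[simp] lemma Complex.abs_conj (z : ℂ) : Complex.abs ((starRingEnd ℂ) z) = Complex.abs z :=
  Complex.norm_conj z

@[simp] lemma Complex.abs_ofReal (r : ℝ) : Complex.abs (r : ℂ) = |r| :=
  Complex.norm_real r

lemma Complex.sq_abs (z : ℂ) : Complex.abs z ^ 2 = Complex.normSq z :=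
  (Complex.normSq_eq_norm_sq z).symm

lemma Complex.normSq_eq_abs (z : ℂ) : Complex.normSq z = Complex.abs z ^ 2 :=
  Complex.normSq_eq_norm_sq z

noncomputable def mob (c w : ℂ) : ℂ := (w - c) / (1 - (starRingEnd ℂ) c * w)

-- key identity, complex form
lemma mob_identity (c w : ℂ) :
    (1 - (starRingEnd ℂ) c * w) * (starRingEnd ℂ) (1 - (starRingEnd ℂ) c * w)
      - (w - c) * (starRingEnd ℂ) (w - c)
      = (1 - c * (starRingEnd ℂ) c) * (1 - w * (starRingEnd ℂ) w) := by
  simp only [map_sub, map_mul, map_one, Complex.conj_conj]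
  ring

lemma normSq_identity (c w : ℂ) :
    Complex.normSq (1 - (starRingEnd ℂ) c * w) - Complex.normSq (w - c)
      = (1 - Complex.normSq c) * (1 - Complex.normSq w) := by
  have := mob_identity c w
  rw [Complex.mul_conj, Complex.mul_conj, Complex.mul_conj, Complex.mul_conj] at this
  exact_mod_cast (by exact_mod_cast this : ((Complex.normSq (1 - (starRingEnd ℂ) c * w) - Complex.normSq (w - c) : ℝ) : ℂ) = ((1 - Complex.normSq c) * (1 - Complex.normSq w) : ℝ))

lemma abs_sq_identity (c w : ℂ) :
    Complex.abs (1 - (starRingEnd ℂ) c * w) ^ 2 - Complex.abs (w - c) ^ 2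
      = (1 - Complex.abs c ^ 2) * (1 - Complex.abs w ^ 2) := by
  simp only [Complex.sq_abs]
  exact normSq_identity c w

lemma one_sub_conj_ne (c w : ℂ) (hc : Complex.abs c < 1) (hw : Complex.abs w ≤ 1) :
    1 - (starRingEnd ℂ) c * w ≠ 0 := by
  intro h
  have h1 : Complex.abs ((starRingEnd ℂ) c * w) < 1 := by
    rw [map_mul, Complex.abs_conj]
    calc Complex.abs c * Complex.abs w ≤ Complex.abs c * 1 :=
      mul_le_mul_of_nonneg_left hw (Complex.abs.nonneg c)
    _ < 1 := by simpa using hc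
  have : (1 : ℂ) = (starRingEnd ℂ) c * w := by linear_combination h
  rw [← this] at h1
  simp at h1

lemma abs_one_sub_conj_ge (c w : ℂ) :
    1 - Complex.abs c * Complex.abs w ≤ Complex.abs (1 - (starRingEnd ℂ) c * w) := by
  calc 1 - Complex.abs c * Complex.abs w
      = Complex.abs 1 - Complex.abs ((starRingEnd ℂ) c * w) := by
        simp [map_mul, Complex.abs_conj]
    _ ≤ Complex.abs (1 - (starRingEnd ℂ) c * w) := by
        simpa using AbsoluteValue.le_sub Complex.abs 1 ((starRingEnd ℂ) c * w)

lemma abs_one_sub_conj_pos (c w : ℂ) (hc : Complex.abs c < 1) (hw : Complex.abs w ≤ 1) :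
    0 < Complex.abs (1 - (starRingEnd ℂ) c * w) := by
  have := one_sub_conj_ne c w hc hw
  simpa [Complex.abs.pos_iff] using this

lemma mob_mem (c w : ℂ) (hc : Complex.abs c < 1) (hw : Complex.abs w < 1) :
    Complex.abs (mob c w) < 1 := by
  rw [mob, map_div₀, div_lt_one (abs_one_sub_conj_pos c w hc hw.le)]
  have h2 := abs_sq_identity c w
  have hP : 0 < (1 - Complex.abs c ^ 2) * (1 - Complex.abs w ^ 2) := by
    apply mul_pos <;> nlinarith [Complex.abs.nonneg c, Complex.abs.nonneg w]
  nlinarith [Complex.abs.nonneg (w - c), Complex.abs.nonneg (1 - (starRingEnd ℂ) c * w)]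

lemma mob_self (c : ℂ) : mob c c = 0 := by simp [mob]

lemma mob_denom2 (c w : ℂ) (hc : Complex.abs c < 1) (hw : Complex.abs w < 1) :
    1 - (starRingEnd ℂ) (-c) * mob c w = (1 - c * (starRingEnd ℂ) c) / (1 - (starRingEnd ℂ) c * w) := by
  have hne := one_sub_conj_ne c w hc hw.le
  rw [mob, map_neg, eq_div_iff hne]
  linear_combination ((starRingEnd ℂ) c) * (div_mul_cancel₀ (w - c) hne)

lemma mob_inv (c w : ℂ) (hc : Complex.abs c < 1) (hw : Complex.abs w < 1) :
    mob (-c) (mob c w) = w := by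
  have hne := one_sub_conj_ne c w hc hw.le
  have hcc : (1 : ℂ) - c * (starRingEnd ℂ) c ≠ 0 := by
    rw [Complex.mul_conj]
    intro h
    have h1 : ((1 - Complex.normSq c : ℝ) : ℂ) = 0 := by push_cast; linear_combination h
    have h2 : Complex.normSq c < 1 := by
      rw [Complex.normSq_eq_abs]; nlinarith [Complex.abs.nonneg c]
    rw [Complex.ofReal_eq_zero] at h1
    linarith
  rw [mob, mob_denom2 c w hc hw, mob, div_eq_iff (div_ne_zero hcc hne)]
  linear_combination (-c) * (inv_mul_cancel₀ hne)

lemma mob_diffOn (c : ℂ) (hc : Complex.abs c < 1) :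
    DifferentiableOn ℂ (mob c) (ball (0:ℂ) 1) := by
  apply DifferentiableOn.div
  · exact (differentiableOn_id.sub (differentiableOn_const c))
  · exact (differentiableOn_const 1).sub ((differentiableOn_const _).mul differentiableOn_id)
  · intro w hw
    rw [mem_ball_zero_iff] at hw
    exact one_sub_conj_ne c w hc hw.le

lemma mob_mapsTo (c : ℂ) (hc : Complex.abs c < 1) :
    MapsTo (mob c) (ball (0:ℂ) 1) (ball (0:ℂ) 1) := by
  intro w hw
  rw [mem_ball_zero_iff] at *
  exact mob_mem c w hc hw

lemma schwarz_self {f : ℂ → ℂ} (hf : DifferentiableOn ℂ f (ball (0:ℂ) 1))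
    (hm : MapsTo f (ball (0:ℂ) 1) (ball (0:ℂ) 1)) (h0 : f 0 = 0)
    {w : ℂ} (hw : w ∈ ball (0:ℂ) 1) : Complex.abs (f w) ≤ Complex.abs w := by
  have hm' : MapsTo f (ball (0:ℂ) 1) (closedBall (f 0) 1) := by
    rw [h0]; exact hm.mono_right ball_subset_closedBall
  have hd := Complex.norm_dslope_le_div_of_mapsTo_ball hf hm' hw
  rcases eq_or_ne w 0 with rfl | hne
  · simp [h0]
  · rw [dslope_of_ne _ hne, slope_def_field] at hd
    have : Complex.abs ((f w - f 0) / (w - 0)) ≤ 1 := by simpa using hd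
    rw [h0, sub_zero, sub_zero, map_div₀, div_le_one (by simpa [Complex.abs.pos_iff] using hne)] at this
    simpa using this

lemma schwarz_pick {f : ℂ → ℂ} (hf : DifferentiableOn ℂ f (ball (0:ℂ) 1))
    (hm : MapsTo f (ball (0:ℂ) 1) (ball (0:ℂ) 1)) {u v : ℂ}
    (hu : u ∈ ball (0:ℂ) 1) (hv : v ∈ ball (0:ℂ) 1) :
    Complex.abs (mob (f u) (f v)) ≤ Complex.abs (mob u v) := by
  rw [mem_ball_zero_iff] at hu hv
  have hau : Complex.abs (-u) < 1 := by simpa using hu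
  have hfu : Complex.abs (f u) < 1 := by
    have := hm (by simpa [mem_ball_zero_iff] using hu)
    rwa [mem_ball_zero_iff] at this
  set K : ℂ → ℂ := (mob (f u)) ∘ f ∘ (mob (-u)) with hK
  have hmapsK : MapsTo K (ball (0:ℂ) 1) (ball (0:ℂ) 1) :=
    ((mob_mapsTo (f u) hfu).comp (hm.comp (mob_mapsTo (-u) hau)))
  have hdiffK : DifferentiableOn ℂ K (ball (0:ℂ) 1) := by
    apply DifferentiableOn.comp (mob_diffOn (f u) hfu)
    · exact DifferentiableOn.comp hf (mob_diffOn (-u) hau) (mob_mapsTo (-u) hau)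
    · exact (hm.comp (mob_mapsTo (-u) hau))
  have hK0 : K 0 = 0 := by
    have h1 : mob (-u) 0 = u := by simp [mob]
    simp [hK, Function.comp, h1, mob_self]
  have hmem : mob u v ∈ ball (0:ℂ) 1 := by
    rw [mem_ball_zero_iff]; exact mob_mem u v hu hv
  have := schwarz_self hdiffK hmapsK hK0 hmem
  have hKv : K (mob u v) = mob (f u) (f v) := by
    simp [hK, Function.comp, mob_inv u v hu hv]
  rw [hKv] at this
  exact this

lemma abs_one_sub_cc (c : ℂ) (hc : Complex.abs c < 1) :
    Complex.abs (1 - c * (starRingEnd ℂ) c) ≤ 1 := by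
  have h1 : Complex.normSq c < 1 := by
    rw [Complex.normSq_eq_abs]; nlinarith [Complex.abs.nonneg c]
  have h2 : (0:ℝ) ≤ Complex.normSq c := Complex.normSq_nonneg c
  have h3 : (1 : ℂ) - c * (starRingEnd ℂ) c = ((1 - Complex.normSq c : ℝ) : ℂ) := by
    rw [Complex.mul_conj]; push_cast; ring
  rw [h3, Complex.abs_ofReal]
  rw [_root_.abs_of_nonneg (show (0:ℝ) ≤ 1 - Complex.normSq c by linarith)]
  linarith

lemma mob_sub_same (c X Y : ℂ) (hc : Complex.abs c < 1) (hX : Complex.abs X < 1)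
    (hY : Complex.abs Y < 1) :
    Complex.abs (mob c X - mob c Y)
      ≤ Complex.abs (X - Y) / ((1 - Complex.abs c * Complex.abs X) * (1 - Complex.abs c * Complex.abs Y)) := by
  have hdX := one_sub_conj_ne c X hc hX.le
  have hdY := one_sub_conj_ne c Y hc hY.le
  have heq : mob c X - mob c Y
      = (X - Y) * (1 - c * (starRingEnd ℂ) c) / ((1 - (starRingEnd ℂ) c * X) * (1 - (starRingEnd ℂ) c * Y)) := by
    rw [mob, mob, div_sub_div _ _ hdX hdY]; congr 1; ring
  rw [heq, map_div₀, map_mul, map_mul]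
  have hpX : 0 < 1 - Complex.abs c * Complex.abs X := by
    nlinarith [Complex.abs.nonneg c, Complex.abs.nonneg X]
  have hpY : 0 < 1 - Complex.abs c * Complex.abs Y := by
    nlinarith [Complex.abs.nonneg c, Complex.abs.nonneg Y]
  apply div_le_div₀ (by positivity)
  · calc Complex.abs (X - Y) * Complex.abs (1 - c * (starRingEnd ℂ) c)
        ≤ Complex.abs (X - Y) * 1 :=
          mul_le_mul_of_nonneg_left (abs_one_sub_cc c hc) (Complex.abs.nonneg _)
      _ = Complex.abs (X - Y) := mul_one _
  · exact mul_pos hpX hpY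
  · exact mul_le_mul (abs_one_sub_conj_ge c X) (abs_one_sub_conj_ge c Y) hpY.le
      (Complex.abs.nonneg _)

lemma mob_sub_param (c c' w : ℂ) (hc : Complex.abs c < 1) (hc' : Complex.abs c' < 1)
    (hw : Complex.abs w < 1) :
    Complex.abs (mob c w - mob c' w)
      ≤ 4 * Complex.abs (c - c') / ((1 - Complex.abs c * Complex.abs w) * (1 - Complex.abs c' * Complex.abs w)) := by
  have hd := one_sub_conj_ne c w hc hw.le
  have hd' := one_sub_conj_ne c' w hc' hw.le
  have heq : mob c w - mob c' w
      = ((c' - c) + w^2 * ((starRingEnd ℂ) c - (starRingEnd ℂ) c')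
          + w * (c * (starRingEnd ℂ) c' - c' * (starRingEnd ℂ) c))
        / ((1 - (starRingEnd ℂ) c * w) * (1 - (starRingEnd ℂ) c' * w)) := by
    rw [mob, mob, div_sub_div _ _ hd hd']; congr 1; ring
  rw [heq, map_div₀, map_mul]
  have hp : 0 < 1 - Complex.abs c * Complex.abs w := by
    nlinarith [Complex.abs.nonneg c, Complex.abs.nonneg w]
  have hp' : 0 < 1 - Complex.abs c' * Complex.abs w := by
    nlinarith [Complex.abs.nonneg c', Complex.abs.nonneg w]
  apply div_le_div₀ (by positivity)
  · have h1 : Complex.abs ((starRingEnd ℂ) c - (starRingEnd ℂ) c') = Complex.abs (c - c') := by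
      rw [← map_sub, Complex.abs_conj]
    have h2 : Complex.abs (c * (starRingEnd ℂ) c' - c' * (starRingEnd ℂ) c) ≤ 2 * Complex.abs (c - c') := by
      calc Complex.abs (c * (starRingEnd ℂ) c' - c' * (starRingEnd ℂ) c)
          = Complex.abs ((c - c') * (starRingEnd ℂ) c' + ((starRingEnd ℂ) c' - (starRingEnd ℂ) c) * c') := by
            ring_nf
        _ ≤ Complex.abs ((c - c') * (starRingEnd ℂ) c') + Complex.abs (((starRingEnd ℂ) c' - (starRingEnd ℂ) c) * c') :=
            Complex.abs.add_le _ _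
        _ ≤ Complex.abs (c - c') * 1 + Complex.abs (c - c') * 1 := by
            rw [map_mul, map_mul]
            have e1 : Complex.abs ((starRingEnd ℂ) c' - (starRingEnd ℂ) c) = Complex.abs (c' - c) := by
              rw [← map_sub, Complex.abs_conj]
            have e2 : Complex.abs (c' - c) = Complex.abs (c - c') := by
              rw [show c' - c = -(c - c') by ring, Complex.abs.map_neg]
            have e3 : Complex.abs ((starRingEnd ℂ) c') ≤ 1 := by rw [Complex.abs_conj]; exact hc'.le
            rw [e1, e2]
            have := Complex.abs.nonneg (c - c')
            nlinarith [hc'.le, Complex.abs.nonneg c']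
        _ = 2 * Complex.abs (c - c') := by ring
    calc Complex.abs ((c' - c) + w^2 * ((starRingEnd ℂ) c - (starRingEnd ℂ) c')
          + w * (c * (starRingEnd ℂ) c' - c' * (starRingEnd ℂ) c))
        ≤ Complex.abs ((c' - c) + w^2 * ((starRingEnd ℂ) c - (starRingEnd ℂ) c'))
          + Complex.abs (w * (c * (starRingEnd ℂ) c' - c' * (starRingEnd ℂ) c)) := Complex.abs.add_le _ _
      _ ≤ (Complex.abs (c' - c) + Complex.abs (w^2 * ((starRingEnd ℂ) c - (starRingEnd ℂ) c')))
          + Complex.abs (w * (c * (starRingEnd ℂ) c' - c' * (starRingEnd ℂ) c)) := by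
            gcongr
            exact Complex.abs.add_le _ _
      _ ≤ 4 * Complex.abs (c - c') := by
        rw [map_mul, map_mul]
        have hw2 : Complex.abs (w ^ 2) ≤ 1 := by
          rw [map_pow]; nlinarith [Complex.abs.nonneg w]
        have hcc' : Complex.abs (c' - c) = Complex.abs (c - c') := by
          rw [show c' - c = -(c - c') by ring, Complex.abs.map_neg]
        have t1 : Complex.abs (w ^ 2) * Complex.abs ((starRingEnd ℂ) c - (starRingEnd ℂ) c')
            ≤ Complex.abs (c - c') := by
          rw [h1]
          nlinarith [Complex.abs.nonneg (c - c'), Complex.abs.nonneg (w ^ 2)]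
        have t2 : Complex.abs w * Complex.abs (c * (starRingEnd ℂ) c' - c' * (starRingEnd ℂ) c)
            ≤ 2 * Complex.abs (c - c') := by
          nlinarith [hw.le, Complex.abs.nonneg w,
            Complex.abs.nonneg (c * (starRingEnd ℂ) c' - c' * (starRingEnd ℂ) c), h2]
        linarith [hcc'.le]
  · exact mul_pos hp hp'
  · exact mul_le_mul (abs_one_sub_conj_ge c w) (abs_one_sub_conj_ge c' w) hp'.le (Complex.abs.nonneg _)


lemma sinh_le_two_mul {x : ℝ} (h0 : 0 ≤ x) (h1 : x ≤ 1/2) : Real.sinh x ≤ 2 * x := by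
  have e1 : 1 - x ≤ Real.exp (-x) := by
    have := Real.add_one_le_exp (-x); linarith
  have e2 : Real.exp x * Real.exp (-x) = 1 := by
    rw [← Real.exp_add]; simp
  have hpos : (0:ℝ) < 1 - x := by linarith
  have e3 : Real.exp x ≤ 1 / (1 - x) := by
    rw [le_div_iff₀ hpos]
    calc Real.exp x * (1 - x) ≤ Real.exp x * Real.exp (-x) :=
      mul_le_mul_of_nonneg_left e1 (Real.exp_pos x).le
    _ = 1 := e2
  rw [Real.sinh_eq]
  rw [div_le_iff₀ (by norm_num : (0:ℝ) < 2)]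
  have : Real.exp x - Real.exp (-x) ≤ 1/(1-x) - (1-x) := by linarith
  calc Real.exp x - Real.exp (-x) ≤ 1/(1-x) - (1-x) := this
    _ ≤ 2 * x * 2 := by
      rw [div_sub' hpos.ne', div_le_iff₀ hpos]
      nlinarith

lemma arsinh_le_self {x : ℝ} (hx : 0 ≤ x) : Real.arsinh x ≤ x := by
  calc Real.arsinh x ≤ Real.arsinh (Real.sinh x) :=
      Real.arsinh_le_arsinh.mpr (Real.self_le_sinh_iff.mpr hx)
    _ = x := Real.arsinh_sinh x

lemma rho_nonneg (u v : ℂ) : 0 ≤ rho u v := by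
  rw [rho]
  have : 0 ≤ Real.arsinh (‖u - v‖ /
      Real.sqrt ((1 - ‖u‖ ^ 2) * (1 - ‖v‖ ^ 2))) := by
    rw [Real.arsinh_nonneg_iff]
    positivity
  linarith

lemma mob_abs_eq (u v : ℂ) (hu : Complex.abs u < 1) (hv : Complex.abs v < 1) :
    Complex.abs (mob u v) = Complex.abs (u - v) / Complex.abs (1 - (starRingEnd ℂ) u * v) := by
  rw [mob, map_div₀, show v - u = -(u - v) by ring, Complex.abs.map_neg]

lemma sq_identity' (u v : ℂ) :
    Complex.abs (1 - (starRingEnd ℂ) u * v) ^ 2 - Complex.abs (u - v) ^ 2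
      = (1 - Complex.abs u ^ 2) * (1 - Complex.abs v ^ 2) := by
  have := abs_sq_identity u v
  rwa [show v - u = -(u - v) by ring, Complex.abs.map_neg] at this

lemma mob_le_rho (u v : ℂ) (hu : Complex.abs u < 1) (hv : Complex.abs v < 1)
    (hr : rho u v ≤ 1) : Complex.abs (mob u v) ≤ rho u v := by
  set E := Complex.abs (u - v) with hE
  set D := Complex.abs (1 - (starRingEnd ℂ) u * v) with hD
  have hDpos : 0 < D := abs_one_sub_conj_pos u v hu hv.le
  set P := (1 - Complex.abs u ^ 2) * (1 - Complex.abs v ^ 2) with hPdef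
  have hPpos : 0 < P := by
    apply mul_pos <;> nlinarith [Complex.abs.nonneg u, Complex.abs.nonneg v]
  have hid : D ^ 2 - E ^ 2 = P := sq_identity' u v
  have hm : Complex.abs (mob u v) = E / D := mob_abs_eq u v hu hv
  have hsqrt_le : Real.sqrt P ≤ D := by
    rw [← Real.sqrt_sq hDpos.le]
    apply Real.sqrt_le_sqrt
    nlinarith [sq_nonneg E]
  have hsqrtpos : 0 < Real.sqrt P := Real.sqrt_pos.mpr hPpos
  have hX : E / D ≤ E / Real.sqrt P := by
    apply div_le_div_of_nonneg_left (by positivity) hsqrtpos hsqrt_le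
  have hrho : rho u v = 2 * Real.arsinh (E / Real.sqrt P) := rfl
  have hsinh : Real.sinh (rho u v / 2) = E / Real.sqrt P := by
    rw [hrho]; rw [show 2 * Real.arsinh (E / Real.sqrt P) / 2 = Real.arsinh (E / Real.sqrt P) by ring]
    exact Real.sinh_arsinh _
  have h0 : 0 ≤ rho u v := rho_nonneg u v
  have := sinh_le_two_mul (x := rho u v / 2) (by linarith) (by linarith)
  rw [hsinh] at this
  rw [hm]
  calc E / D ≤ E / Real.sqrt P := hX
    _ ≤ 2 * (rho u v / 2) := this
    _ = rho u v := by ring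

lemma rho_le_four_mob (u v : ℂ) (hu : Complex.abs u < 1) (hv : Complex.abs v < 1)
    (hm : Complex.abs (mob u v) ≤ 1/2) : rho u v ≤ 4 * Complex.abs (mob u v) := by
  set E := Complex.abs (u - v) with hE
  set D := Complex.abs (1 - (starRingEnd ℂ) u * v) with hD
  have hDpos : 0 < D := abs_one_sub_conj_pos u v hu hv.le
  set P := (1 - Complex.abs u ^ 2) * (1 - Complex.abs v ^ 2) with hPdef
  have hPpos : 0 < P := by
    apply mul_pos <;> nlinarith [Complex.abs.nonneg u, Complex.abs.nonneg v]
  have hid : D ^ 2 - E ^ 2 = P := sq_identity' u v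
  have hmeq : Complex.abs (mob u v) = E / D := mob_abs_eq u v hu hv
  have hEnn : 0 ≤ E := Complex.abs.nonneg _
  have hE_le : E ≤ D / 2 := by
    rw [hmeq, div_le_div_iff₀ hDpos (by norm_num : (0:ℝ) < 2)] at hm
    linarith
  have hsqrt_ge : D / 2 ≤ Real.sqrt P := by
    rw [show D / 2 = Real.sqrt ((D/2)^2) from (Real.sqrt_sq (by positivity)).symm]
    apply Real.sqrt_le_sqrt
    nlinarith
  have hX : E / Real.sqrt P ≤ 2 * (E / D) := by
    rw [div_le_iff₀ (Real.sqrt_pos.mpr hPpos)]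
    rw [show 2 * (E / D) * Real.sqrt P = (2 * Real.sqrt P / D) * E by ring]
    have h1 : (1:ℝ) ≤ 2 * Real.sqrt P / D := by
      rw [le_div_iff₀ hDpos]; linarith
    nlinarith
  have hrho : rho u v = 2 * Real.arsinh (E / Real.sqrt P) := rfl
  rw [hrho, hmeq]
  have har := arsinh_le_self (x := E / Real.sqrt P) (by positivity)
  linarith

lemma normSq_one_sub (z : ℂ) :
    Complex.normSq (1 - z) = 1 - 2 * z.re + Complex.normSq z := by
  simp [Complex.normSq_apply, Complex.sub_re, Complex.sub_im]; ring

lemma h_bound {h : ℂ → ℂ} (hd : DifferentiableOn ℂ h (ball (0:ℂ) 1))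
    (hb : ∀ w ∈ ball (0:ℂ) 1, Complex.abs (h w) ≤ 1)
    {p q : ℂ} (hp : p ∈ ball (0:ℂ) 1) (hq : q ∈ ball (0:ℂ) 1) :
    Complex.abs (1 - h q)
      ≤ (1 + Complex.abs (mob p q)) / (1 - Complex.abs (mob p q)) * Complex.abs (1 - h p) := by
  have hp' := mem_ball_zero_iff.mp hp
  have hq' := mem_ball_zero_iff.mp hq
  set r := Complex.abs (mob p q) with hrdef
  have hr0 : 0 ≤ r := Complex.abs.nonneg _
  have hr1 : r < 1 := mob_mem p q hp' hq'
  have hC1 : 1 ≤ (1 + r) / (1 - r) := by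
    rw [le_div_iff₀ (by linarith)]; linarith
  by_cases hA : ∀ w ∈ ball (0:ℂ) 1, Complex.abs (h w) < 1
  · -- strict case
    have hne : ∀ w ∈ ball (0:ℂ) 1, (1 : ℂ) - h w ≠ 0 := by
      intro w hw hzero
      have e1 : h w = 1 := by linear_combination -hzero
      have e2 := hA w hw
      rw [e1] at e2
      simp at e2
    set H : ℂ → ℂ := fun w => (1 - h w)⁻¹ with hHdef
    have hHre : ∀ w ∈ ball (0:ℂ) 1, 1/2 < (H w).re := by
      intro w hw
      have hnz := hne w hw
      have hnsq : 0 < Complex.normSq (1 - h w) := Complex.normSq_pos.mpr hnz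
      rw [hHdef]
      simp only [Complex.inv_re]
      rw [lt_div_iff₀ hnsq, normSq_one_sub]
      have habs : Complex.normSq (h w) < 1 := by
        rw [Complex.normSq_eq_abs]
        nlinarith [hA w hw, Complex.abs.nonneg (h w)]
      have : (1 - h w).re = 1 - (h w).re := by simp [Complex.sub_re]
      rw [this]
      nlinarith
    have hHdiff : DifferentiableOn ℂ H (ball (0:ℂ) 1) := by
      apply DifferentiableOn.inv ((differentiableOn_const 1).sub hd)
      exact hne
    set Hp := H p with hHp
    have hHp_re : 1/2 < Hp.re := hHre p hp
    have hden_ne : ∀ w ∈ ball (0:ℂ) 1, H w + (starRingEnd ℂ) Hp ≠ 0 := by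
      intro w hw hzero
      have h1 : (H w + (starRingEnd ℂ) Hp).re = (H w).re + Hp.re := by
        simp [Complex.add_re, Complex.conj_re]
      have h2 := hHre w hw
      rw [hzero] at h1
      simp at h1
      linarith
    set G : ℂ → ℂ := fun w => (H w - Hp) / (H w + (starRingEnd ℂ) Hp) with hGdef
    have hGdiff : DifferentiableOn ℂ G (ball (0:ℂ) 1) := by
      apply DifferentiableOn.div (hHdiff.sub (differentiableOn_const Hp))
        (hHdiff.add (differentiableOn_const _)) hden_ne
    have key_id : ∀ A B : ℂ, Complex.normSq (A + (starRingEnd ℂ) B) - Complex.normSq (A - B)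
        = 4 * A.re * B.re := by
      intro A B
      simp [Complex.normSq_apply, Complex.add_re, Complex.add_im, Complex.sub_re, Complex.sub_im,
        Complex.conj_re, Complex.conj_im]
      ring
    have hGmaps : MapsTo G (ball (0:ℂ) 1) (ball (0:ℂ) 1) := by
      intro w hw
      rw [mem_ball_zero_iff, hGdef]
      simp only [Complex.norm_eq_abs]
      rw [map_div₀, div_lt_one (by
        have := hden_ne w hw
        simpa [Complex.abs.pos_iff] using this)]
      have hid := key_id (H w) Hp
      have hposs : 0 < 4 * (H w).re * Hp.re := by
        have := hHre w hw
        nlinarith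
      have e1 : Complex.abs (H w - Hp) ^ 2 = Complex.normSq (H w - Hp) := by
        rw [Complex.sq_abs]
      have e2 : Complex.abs (H w + (starRingEnd ℂ) Hp) ^ 2
          = Complex.normSq (H w + (starRingEnd ℂ) Hp) := by rw [Complex.sq_abs]
      nlinarith [Complex.abs.nonneg (H w - Hp), Complex.abs.nonneg (H w + (starRingEnd ℂ) Hp)]
    have hGp : G p = 0 := by simp [hGdef, hHp]
    have hSP := schwarz_pick hGdiff hGmaps hp hq
    rw [hGp] at hSP
    have hmob0 : mob 0 (G q) = G q := by simp [mob]
    rw [hmob0] at hSP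
    -- unpack
    have hGq : Complex.abs (H q - Hp) ≤ r * Complex.abs (H q + (starRingEnd ℂ) Hp) := by
      have hden := hden_ne q hq
      have : Complex.abs (G q) = Complex.abs (H q - Hp) / Complex.abs (H q + (starRingEnd ℂ) Hp) := by
        rw [hGdef]; simp only; rw [map_div₀]
      rw [this, div_le_iff₀ (by simpa [Complex.abs.pos_iff] using hden)] at hSP
      linarith
    have habs_conj : Complex.abs ((starRingEnd ℂ) Hp) = Complex.abs Hp := Complex.abs_conj _
    have htri : Complex.abs (H q + (starRingEnd ℂ) Hp) ≤ Complex.abs (H q) + Complex.abs Hp := by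
      calc Complex.abs (H q + (starRingEnd ℂ) Hp)
          ≤ Complex.abs (H q) + Complex.abs ((starRingEnd ℂ) Hp) := Complex.abs.add_le _ _
        _ = Complex.abs (H q) + Complex.abs Hp := by rw [habs_conj]
    have hlow : Complex.abs Hp - Complex.abs (H q) ≤ Complex.abs (H q - Hp) := by
      have := AbsoluteValue.le_sub Complex.abs Hp (H q)
      calc Complex.abs Hp - Complex.abs (H q) ≤ Complex.abs (Hp - H q) := this
        _ = Complex.abs (H q - Hp) := by
          rw [show Hp - H q = -(H q - Hp) by ring, Complex.abs.map_neg]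
    have hHineq : (1 - r) * Complex.abs Hp ≤ (1 + r) * Complex.abs (H q) := by
      nlinarith [Complex.abs.nonneg (H q), Complex.abs.nonneg Hp]
    -- convert back
    have hHq_abs : Complex.abs (H q) = (Complex.abs (1 - h q))⁻¹ := by
      rw [hHdef]; simp only; rw [map_inv₀]
    have hHp_abs : Complex.abs Hp = (Complex.abs (1 - h p))⁻¹ := by
      rw [hHp, hHdef]; simp only; rw [map_inv₀]
    have hq_pos : 0 < Complex.abs (1 - h q) := by
      simpa [Complex.abs.pos_iff] using hne q hq
    have hp_pos : 0 < Complex.abs (1 - h p) := by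
      simpa [Complex.abs.pos_iff] using hne p hp
    rw [hHq_abs, hHp_abs] at hHineq
    rw [div_mul_eq_mul_div, le_div_iff₀ (by linarith)]
    have h1r : 0 < 1 - r := by linarith
    have eA : Complex.abs (1 - h p) * (Complex.abs (1 - h p))⁻¹ = 1 := mul_inv_cancel₀ hp_pos.ne'
    have eB : Complex.abs (1 - h q) * (Complex.abs (1 - h q))⁻¹ = 1 := mul_inv_cancel₀ hq_pos.ne'
    have hmul := mul_le_mul_of_nonneg_left hHineq
      (le_of_lt (mul_pos hp_pos hq_pos))
    calc Complex.abs (1 - h q) * (1 - r)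
        = ((1 - r) * (Complex.abs (1 - h p))⁻¹) * (Complex.abs (1 - h p) * Complex.abs (1 - h q))
          - (1 - r) * Complex.abs (1 - h q) * ((Complex.abs (1 - h p)) * (Complex.abs (1 - h p))⁻¹ - 1) := by
          ring
      _ = ((1 - r) * (Complex.abs (1 - h p))⁻¹) * (Complex.abs (1 - h p) * Complex.abs (1 - h q)) := by
          rw [eA]; ring
      _ ≤ ((1 + r) * (Complex.abs (1 - h q))⁻¹) * (Complex.abs (1 - h p) * Complex.abs (1 - h q)) := by
          apply mul_le_mul_of_nonneg_right hHineq (by positivity)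
      _ = (1 + r) * Complex.abs (1 - h p) * (Complex.abs (1 - h q) * (Complex.abs (1 - h q))⁻¹) := by
          ring
      _ = (1 + r) * Complex.abs (1 - h p) := by rw [eB]; ring
  · -- max modulus case: h is constant
    push_neg at hA
    obtain ⟨w₀, hw₀, hw₀ge⟩ := hA
    have hmax : IsMaxOn (norm ∘ h) (ball (0:ℂ) 1) w₀ := by
      rw [isMaxOn_iff]
      intro w hw
      simp only [Function.comp_apply, Complex.norm_eq_abs]
      calc Complex.abs (h w) ≤ 1 := hb w hw
        _ ≤ Complex.abs (h w₀) := hw₀ge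
    have heq := Complex.eqOn_of_isPreconnected_of_isMaxOn_norm
      (convex_ball (0:ℂ) 1).isPreconnected isOpen_ball hd hw₀ hmax
    have h1 : h q = h w₀ := heq hq
    have h2 : h p = h w₀ := heq hp
    rw [h1, ← h2]
    nlinarith [Complex.abs.nonneg (1 - h p)]

lemma abs_sub_le_two_mob (u v : ℂ) (hu : Complex.abs u < 1) (hv : Complex.abs v < 1) :
    Complex.abs (u - v) ≤ 2 * Complex.abs (mob u v) := by
  have h1 : Complex.abs (1 - (starRingEnd ℂ) u * v) ≤ 2 := by
    calc Complex.abs (1 - (starRingEnd ℂ) u * v)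
        ≤ Complex.abs 1 + Complex.abs ((starRingEnd ℂ) u * v) := by
          have := Complex.abs.add_le 1 (-((starRingEnd ℂ) u * v))
          rwa [← sub_eq_add_neg, Complex.abs.map_neg] at this
      _ ≤ 1 + 1 := by
          simp only [map_one, map_mul, Complex.abs_conj]
          nlinarith [Complex.abs.nonneg u, Complex.abs.nonneg v]
      _ = 2 := by norm_num
  have h2 := mob_abs_eq u v hu hv
  have h3 : 0 < Complex.abs (1 - (starRingEnd ℂ) u * v) := abs_one_sub_conj_pos u v hu hv.le
  rw [h2]
  have h4 : Complex.abs (u - v) / 2 ≤ Complex.abs (u - v) / Complex.abs (1 - (starRingEnd ℂ) u * v) :=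
    div_le_div_of_nonneg_left (Complex.abs.nonneg _) h3 h1
  linarith

lemma mob_abs_symm (u v : ℂ) :
    Complex.abs (mob u v) = Complex.abs (mob v u) := by
  rw [mob, mob, map_div₀, map_div₀]
  have h1 : Complex.abs (v - u) = Complex.abs (u - v) := by
    rw [show v - u = -(u - v) by ring, Complex.abs.map_neg]
  have h2 : Complex.abs (1 - (starRingEnd ℂ) u * v) = Complex.abs (1 - (starRingEnd ℂ) v * u) := by
    rw [← Complex.abs_conj (1 - (starRingEnd ℂ) u * v)]
    simp only [map_sub, map_mul, map_one, Complex.conj_conj]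
    ring_nf
  rw [h1, h2]

lemma arith1 {β δ A₁ s t : ℝ} (hβ : 0 < β) (hA : 0 < 1 - A₁) (hδ : 0 ≤ δ)
    (hs : 0 ≤ s) (ht : 0 ≤ t) (hkey : β * δ * (1 - A₁) ^ 2 ≤ 2 * t + 8 * s) :
    δ ≤ 8 / (β * (1 - A₁) ^ 2) * (s + t) := by
  have hden : (0:ℝ) < β * (1 - A₁) ^ 2 := mul_pos hβ (pow_pos hA 2)
  rw [div_mul_eq_mul_div, le_div_iff₀ hden]
  nlinarith

set_option maxHeartbeats 1000000 in
lemma main_est (a b z : ℂ) (ha : Complex.abs a < 1) (hb : Complex.abs b < 1)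
    (hz : Complex.abs z < 1) (hab : a ≠ b) :
    ∃ C : ℝ, 0 < C ∧ ∀ f : ℂ → ℂ, DifferentiableOn ℂ f (ball (0:ℂ) 1) →
      MapsTo f (ball (0:ℂ) 1) (ball (0:ℂ) 1) →
      Complex.abs (mob a (f a)) ≤ (1 - Complex.abs a) / 4 →
      Complex.abs (f z - z) ≤ C * (Complex.abs (mob a (f a)) + Complex.abs (mob b (f b))) := by
  set A := Complex.abs a with hA
  have hA0 : 0 ≤ A := Complex.abs.nonneg a
  set A₁ : ℝ := (1 + A) / 2 with hA₁
  have hA₁1 : A₁ < 1 := by rw [hA₁]; linarith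
  have h1A₁ : 0 < 1 - A₁ := by linarith
  set b' := mob a b with hb'
  set z' := mob a z with hz'
  have hb'mem : Complex.abs b' < 1 := mob_mem a b ha hb
  have hz'mem : Complex.abs z' < 1 := mob_mem a z ha hz
  set β := Complex.abs b' with hβ
  have hβpos : 0 < β := by
    rw [hβ, hb', mob]
    rw [map_div₀]
    apply div_pos
    · rw [Complex.abs.pos_iff, sub_ne_zero]; exact fun h => hab h.symm
    · exact abs_one_sub_conj_pos a b ha hb.le
  set ζ := Complex.abs z' with hζ
  have hζ1 : ζ < 1 := hz'mem
  have hζ0 : 0 ≤ ζ := Complex.abs.nonneg _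
  set r := Complex.abs (mob b' z') with hr
  have hr1 : r < 1 := mob_mem b' z' hb'mem hz'mem
  have hr0 : 0 ≤ r := Complex.abs.nonneg _
  set Cr : ℝ := (1 + r) / (1 - r) with hCr
  have hCrpos : 0 < Cr := by apply div_pos <;> linarith
  set C₃ : ℝ := 8 / (β * (1 - A₁) ^ 2) with hC₃
  have hC₃pos : 0 < C₃ := div_pos (by norm_num) (by positivity)
  set C : ℝ := (Cr * C₃ + 8) / (1 - ζ) ^ 2 with hC
  have hCpos : 0 < C := div_pos (by nlinarith) (pow_pos (by linarith) 2)
  refine ⟨C, hCpos, ?_⟩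
  intro f hf hm hs
  set s := Complex.abs (mob a (f a)) with hs_def
  set t := Complex.abs (mob b (f b)) with ht_def
  have hs0 : 0 ≤ s := Complex.abs.nonneg _
  have ht0 : 0 ≤ t := Complex.abs.nonneg _
  have hfa : Complex.abs (f a) < 1 := by
    have := hm (mem_ball_zero_iff.mpr ha); rwa [mem_ball_zero_iff] at this
  have hfb : Complex.abs (f b) < 1 := by
    have := hm (mem_ball_zero_iff.mpr hb); rwa [mem_ball_zero_iff] at this
  have hfz : Complex.abs (f z) < 1 := by
    have := hm (mem_ball_zero_iff.mpr hz); rwa [mem_ball_zero_iff] at this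
  have hfa_a : Complex.abs (f a - a) ≤ 2 * s := by
    have := abs_sub_le_two_mob a (f a) ha hfa
    rw [show Complex.abs (a - f a) = Complex.abs (f a - a) by
      rw [show a - f a = -(f a - a) by ring, Complex.abs.map_neg]] at this
    exact this
  have hfb_b : Complex.abs (f b - b) ≤ 2 * t := by
    have := abs_sub_le_two_mob b (f b) hb hfb
    rw [show Complex.abs (b - f b) = Complex.abs (f b - b) by
      rw [show b - f b = -(f b - b) by ring, Complex.abs.map_neg]] at this
    exact this
  have hfa_le : Complex.abs (f a) ≤ A₁ := by
    calc Complex.abs (f a) = Complex.abs (a + (f a - a)) := by ring_nf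
      _ ≤ Complex.abs a + Complex.abs (f a - a) := Complex.abs.add_le _ _
      _ ≤ A + 2 * s := by rw [← hA]; linarith
      _ ≤ A + (1 - A) / 2 := by linarith
      _ = A₁ := by rw [hA₁]; ring
  set c₀ := f a with hc₀
  have hc₀1 : Complex.abs c₀ < 1 := hfa
  have hma : Complex.abs (-a) < 1 := by simpa using ha
  set F : ℂ → ℂ := (mob c₀) ∘ f ∘ (mob (-a)) with hF
  have hFmaps : MapsTo F (ball (0:ℂ) 1) (ball (0:ℂ) 1) :=
    (mob_mapsTo c₀ hc₀1).comp (hm.comp (mob_mapsTo (-a) hma))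
  have hFdiff : DifferentiableOn ℂ F (ball (0:ℂ) 1) := by
    apply DifferentiableOn.comp (mob_diffOn c₀ hc₀1)
    · exact DifferentiableOn.comp hf (mob_diffOn (-a) hma) (mob_mapsTo (-a) hma)
    · exact hm.comp (mob_mapsTo (-a) hma)
  have hF0 : F 0 = 0 := by
    have h1 : mob (-a) 0 = a := by simp [mob]
    simp [hF, Function.comp, h1, ← hc₀, mob_self]
  set h : ℂ → ℂ := dslope F 0 with hh
  have hhdiff : DifferentiableOn ℂ h (ball (0:ℂ) 1) :=
    (differentiableOn_dslope (isOpen_ball.mem_nhds (mem_ball_self one_pos))).mpr hFdiff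
  have hhb : ∀ w ∈ ball (0:ℂ) 1, Complex.abs (h w) ≤ 1 := by
    intro w hw
    have hFm' : MapsTo F (ball (0:ℂ) 1) (closedBall (F 0) 1) := by
      rw [hF0]; exact hFmaps.mono_right ball_subset_closedBall
    have := Complex.norm_dslope_le_div_of_mapsTo_ball hFdiff hFm' hw
    simpa using this
  have hFeq : ∀ w, w ≠ 0 → F w = w * h w := by
    intro w hw
    rw [hh, dslope_of_ne _ hw, slope_def_field, hF0]
    field_simp
    ring
  clear_value h F s t c₀
  have hb'ball : b' ∈ ball (0:ℂ) 1 := mem_ball_zero_iff.mpr hb'mem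
  have hz'ball : z' ∈ ball (0:ℂ) 1 := mem_ball_zero_iff.mpr hz'mem
  have hb'ne : b' ≠ 0 := by
    rw [← Complex.abs.pos_iff]; exact hβpos
  have hFb' : F b' = mob c₀ (f b) := by
    rw [hF]
    simp only [Function.comp_apply, hb']
    rw [mob_inv a b ha hb]
  have hFz' : F z' = mob c₀ (f z) := by
    rw [hF]
    simp only [Function.comp_apply, hz']
    rw [mob_inv a z ha hz]
  -- step 1 : delta bound
  set δ := Complex.abs (1 - h b') with hδ
  have hstep1 : δ ≤ C₃ * (s + t) := by
    have hfact : b' * (1 - h b') = b' - F b' := by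
      rw [hFeq b' hb'ne]; ring
    have e1 : β * δ = Complex.abs (b' - F b') := by
      rw [hδ, hβ, ← map_mul, hfact]
    have tri : Complex.abs (b' - F b')
        ≤ Complex.abs (mob c₀ (f b) - mob c₀ b) + Complex.abs (mob c₀ b - mob a b) := by
      rw [hFb']
      calc Complex.abs (b' - mob c₀ (f b))
          = Complex.abs ((mob c₀ b - mob c₀ (f b)) + (mob a b - mob c₀ b)) := by
            rw [hb']; ring_nf
        _ ≤ Complex.abs (mob c₀ b - mob c₀ (f b)) + Complex.abs (mob a b - mob c₀ b) :=
            Complex.abs.add_le _ _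
        _ = Complex.abs (mob c₀ (f b) - mob c₀ b) + Complex.abs (mob c₀ b - mob a b) := by
            rw [show mob c₀ b - mob c₀ (f b) = -(mob c₀ (f b) - mob c₀ b) by ring,
              show mob a b - mob c₀ b = -(mob c₀ b - mob a b) by ring,
              Complex.abs.map_neg, Complex.abs.map_neg]
    have hterm1 : Complex.abs (mob c₀ (f b) - mob c₀ b) ≤ 2 * t / (1 - A₁) ^ 2 := by
      have h0 := mob_sub_same c₀ (f b) b hc₀1 hfb hb
      have hd1 : 1 - A₁ ≤ 1 - Complex.abs c₀ * Complex.abs (f b) := by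
        nlinarith [Complex.abs.nonneg c₀, Complex.abs.nonneg (f b)]
      have hd2 : 1 - A₁ ≤ 1 - Complex.abs c₀ * Complex.abs b := by
        nlinarith [Complex.abs.nonneg c₀, Complex.abs.nonneg b]
      calc Complex.abs (mob c₀ (f b) - mob c₀ b)
          ≤ Complex.abs (f b - b) / ((1 - Complex.abs c₀ * Complex.abs (f b)) * (1 - Complex.abs c₀ * Complex.abs b)) := h0
        _ ≤ 2 * t / (1 - A₁) ^ 2 := by
            apply div_le_div₀ (by positivity) hfb_b (by positivity)
            nlinarith
    have hterm2 : Complex.abs (mob c₀ b - mob a b) ≤ 8 * s / (1 - A₁) ^ 2 := by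
      have h0 := mob_sub_param c₀ a b hc₀1 ha hb
      have hd1 : 1 - A₁ ≤ 1 - Complex.abs c₀ * Complex.abs b := by
        nlinarith [Complex.abs.nonneg c₀, Complex.abs.nonneg b]
      have hd2 : 1 - A₁ ≤ 1 - Complex.abs a * Complex.abs b := by
        nlinarith [Complex.abs.nonneg a, Complex.abs.nonneg b]
      have hca : Complex.abs (c₀ - a) ≤ 2 * s := hfa_a
      calc Complex.abs (mob c₀ b - mob a b)
          ≤ 4 * Complex.abs (c₀ - a) / ((1 - Complex.abs c₀ * Complex.abs b) * (1 - Complex.abs a * Complex.abs b)) := h0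
        _ ≤ 4 * (2 * s) / (1 - A₁) ^ 2 := by
            apply div_le_div₀ (by positivity) (by linarith) (by positivity)
            nlinarith
        _ = 8 * s / (1 - A₁) ^ 2 := by ring
    have hβδ : β * δ ≤ (2 * t + 8 * s) / (1 - A₁) ^ 2 := by
      rw [e1]
      calc Complex.abs (b' - F b')
          ≤ Complex.abs (mob c₀ (f b) - mob c₀ b) + Complex.abs (mob c₀ b - mob a b) := tri
        _ ≤ 2 * t / (1 - A₁) ^ 2 + 8 * s / (1 - A₁) ^ 2 := by linarith
        _ = (2 * t + 8 * s) / (1 - A₁) ^ 2 := by ring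
    have hδ0 : 0 ≤ δ := Complex.abs.nonneg _
    have hkey : β * δ * (1 - A₁) ^ 2 ≤ 2 * t + 8 * s := by
      have h5 := mul_le_mul_of_nonneg_right hβδ (sq_nonneg (1 - A₁))
      rwa [div_mul_cancel₀ _ (pow_pos h1A₁ 2).ne'] at h5
    rw [hC₃]
    exact arith1 hβpos h1A₁ hδ0 hs0 ht0 hkey
  -- step 2 : h bound
  have hstep2 : Complex.abs (1 - h z') ≤ Cr * δ := h_bound hhdiff hhb hb'ball hz'ball
  -- step 3 : final bound
  have hfz_eq : f z = mob (-c₀) (F z') := by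
    rw [hFz', mob_inv c₀ (f z) hc₀1 hfz]
  have hz_eq : z = mob (-a) z' := by
    rw [hz', mob_inv a z ha hz]
  have hFz'_abs : Complex.abs (F z') ≤ ζ := by
    have := schwarz_self hFdiff hFmaps hF0 hz'ball
    simpa [hζ] using this
  have hFz'_lt : Complex.abs (F z') < 1 := lt_of_le_of_lt hFz'_abs hζ1
  have hterm1' : Complex.abs (mob (-c₀) (F z') - mob (-c₀) z') ≤ Cr * C₃ * (s + t) / (1 - ζ) ^ 2 := by
    have h0 := mob_sub_same (-c₀) (F z') z' (by simpa using hc₀1) hFz'_lt hz'mem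
    have hc₀a : Complex.abs (-c₀) = Complex.abs c₀ := Complex.abs.map_neg c₀
    have hd1 : 1 - ζ ≤ 1 - Complex.abs (-c₀) * Complex.abs (F z') := by
      rw [hc₀a]
      have e9 : Complex.abs c₀ * Complex.abs (F z') ≤ 1 * ζ :=
        mul_le_mul hc₀1.le hFz'_abs (Complex.abs.nonneg _) one_pos.le
      linarith
    have hd2 : 1 - ζ ≤ 1 - Complex.abs (-c₀) * Complex.abs z' := by
      rw [hc₀a, ← hζ]
      have e9 : Complex.abs c₀ * Complex.abs z' ≤ 1 * ζ := by
        rw [← hζ]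
        exact mul_le_mul hc₀1.le le_rfl (Complex.abs.nonneg _) one_pos.le
      linarith
    have hnum : Complex.abs (F z' - z') ≤ Cr * C₃ * (s + t) := by
      have heq2 : F z' - z' = z' * (h z' - 1) := by
        by_cases hz'0 : z' = 0
        · simp [hz'0, hF0]
        · rw [hFeq z' hz'0]; ring
      rw [heq2, map_mul]
      have : Complex.abs (h z' - 1) = Complex.abs (1 - h z') := by
        rw [show h z' - 1 = -(1 - h z') by ring, Complex.abs.map_neg]
      rw [this, ← hζ]
      have hfirst : ζ * Complex.abs (1 - h z') ≤ 1 * (Cr * δ) :=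
        mul_le_mul hζ1.le hstep2 (Complex.abs.nonneg _) one_pos.le
      calc ζ * Complex.abs (1 - h z') ≤ 1 * (Cr * δ) := hfirst
        _ = Cr * δ := by ring
        _ ≤ Cr * (C₃ * (s + t)) := by
            apply mul_le_mul_of_nonneg_left hstep1 hCrpos.le
        _ = Cr * C₃ * (s + t) := by ring
    calc Complex.abs (mob (-c₀) (F z') - mob (-c₀) z')
        ≤ Complex.abs (F z' - z') / ((1 - Complex.abs (-c₀) * Complex.abs (F z')) * (1 - Complex.abs (-c₀) * Complex.abs z')) := h0
      _ ≤ Cr * C₃ * (s + t) / (1 - ζ) ^ 2 := by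
          rw [sq]
          apply div_le_div₀ (mul_nonneg (mul_nonneg hCrpos.le hC₃pos.le) (by linarith)) hnum
            (mul_pos (by linarith) (by linarith))
          exact mul_le_mul hd1 hd2 (by linarith) (by linarith)
  have hterm2' : Complex.abs (mob (-c₀) z' - mob (-a) z') ≤ 8 * s / (1 - ζ) ^ 2 := by
    have h0 := mob_sub_param (-c₀) (-a) z' (by simpa using hc₀1) (by simpa using ha) hz'mem
    have hc₀a : Complex.abs (-c₀) = Complex.abs c₀ := Complex.abs.map_neg c₀
    have haa : Complex.abs (-a) = A := by rw [Complex.abs.map_neg]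
    have hd1 : 1 - ζ ≤ 1 - Complex.abs (-c₀) * Complex.abs z' := by
      rw [hc₀a, ← hζ]
      have e9 : Complex.abs c₀ * Complex.abs z' ≤ 1 * ζ := by
        rw [← hζ]
        exact mul_le_mul hc₀1.le le_rfl (Complex.abs.nonneg _) one_pos.le
      linarith
    have hd2 : 1 - ζ ≤ 1 - Complex.abs (-a) * Complex.abs z' := by
      rw [haa, ← hζ]
      have e9 : A * Complex.abs z' ≤ 1 * ζ := by
        rw [← hζ]
        exact mul_le_mul ha.le le_rfl (Complex.abs.nonneg _) one_pos.le
      linarith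
    have hnum : Complex.abs (-c₀ - -a) ≤ 2 * s := by
      rw [show -c₀ - -a = -(c₀ - a) by ring, Complex.abs.map_neg]
      exact hfa_a
    calc Complex.abs (mob (-c₀) z' - mob (-a) z')
        ≤ 4 * Complex.abs (-c₀ - -a) / ((1 - Complex.abs (-c₀) * Complex.abs z') * (1 - Complex.abs (-a) * Complex.abs z')) := h0
      _ ≤ 4 * (2 * s) / (1 - ζ) ^ 2 := by
          rw [sq]
          apply div_le_div₀ (by linarith) (by linarith) (mul_pos (by linarith) (by linarith))
          exact mul_le_mul hd1 hd2 (by linarith) (by linarith)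
      _ = 8 * s / (1 - ζ) ^ 2 := by ring
  calc Complex.abs (f z - z)
      = Complex.abs ((mob (-c₀) (F z') - mob (-c₀) z') + (mob (-c₀) z' - mob (-a) z')) := by
        rw [hfz_eq]; nth_rewrite 1 [hz_eq]; ring_nf
    _ ≤ Complex.abs (mob (-c₀) (F z') - mob (-c₀) z') + Complex.abs (mob (-c₀) z' - mob (-a) z') :=
        Complex.abs.add_le _ _
    _ ≤ Cr * C₃ * (s + t) / (1 - ζ) ^ 2 + 8 * s / (1 - ζ) ^ 2 := by linarith
    _ ≤ C * (s + t) := by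
        have hp2 : (0:ℝ) < (1 - ζ) ^ 2 := pow_pos (by linarith) 2
        have h2 : Cr * C₃ * (s + t) + 8 * s ≤ (Cr * C₃ + 8) * (s + t) := by
          have e11 : (Cr * C₃ + 8) * (s + t) = Cr * C₃ * (s + t) + 8 * s + 8 * t := by ring
          rw [e11]; linarith
        calc Cr * C₃ * (s + t) / (1 - ζ) ^ 2 + 8 * s / (1 - ζ) ^ 2
            = (Cr * C₃ * (s + t) + 8 * s) / (1 - ζ) ^ 2 := by ring
          _ ≤ ((Cr * C₃ + 8) * (s + t)) / (1 - ζ) ^ 2 := by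
              exact (div_le_div_iff_of_pos_right hp2).mpr h2
          _ = (Cr * C₃ + 8) / (1 - ζ) ^ 2 * (s + t) := by ring
          _ = C * (s + t) := by rw [hC]

/-- If `(fₙ)` is a sequence of holomorphic self-maps of the disc and the series
`Σ ρ(fₙ(a),a)` and `Σ ρ(fₙ(b),b)` converge for two distinct points `a, b` of
the disc, then `Σ ρ(fₙ(z),z)` converges for every `z` in the disc. -/
theorem summable_two_points_implies_summable (f : ℕ → ℂ → ℂ)
    (hf : ∀ n, DifferentiableOn ℂ (f n) (ball (0:ℂ) 1))
    (hmaps : ∀ n, MapsTo (f n) (ball (0:ℂ) 1) (ball (0:ℂ) 1))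
    (a b : ℂ) (ha : a ∈ ball (0:ℂ) 1) (hb : b ∈ ball (0:ℂ) 1) (hab : a ≠ b)
    (hsa : Summable fun n => rho (f n a) a)
    (hsb : Summable fun n => rho (f n b) b) :
    ∀ z ∈ ball (0:ℂ) 1, Summable fun n => rho (f n z) z := by
  intro z hz0
  have ha' : Complex.abs a < 1 := by simpa [Complex.norm_eq_abs] using mem_ball_zero_iff.mp ha
  have hb' : Complex.abs b < 1 := by simpa [Complex.norm_eq_abs] using mem_ball_zero_iff.mp hb
  have hz' : Complex.abs z < 1 := by simpa [Complex.norm_eq_abs] using mem_ball_zero_iff.mp hz0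
  obtain ⟨C, hCpos, hest⟩ := main_est a b z ha' hb' hz' hab
  set Z := Complex.abs z with hZ
  have hZ0 : 0 ≤ Z := Complex.abs.nonneg z
  set ε : ℝ := min ((1 - Complex.abs a) / 4) (min 1 ((1 - Z) / (4 * C))) with hε
  have hεpos : 0 < ε := by
    apply lt_min (by linarith)
    apply lt_min one_pos
    apply div_pos (by linarith) (by linarith)
  have hεa : ε ≤ (1 - Complex.abs a) / 4 := min_le_left _ _
  have hε1 : ε ≤ 1 := le_trans (min_le_right _ _) (min_le_left _ _)
  have hεz : ε ≤ (1 - Z) / (4 * C) := le_trans (min_le_right _ _) (min_le_right _ _)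
  set K : ℝ := 4 * C / (1 - Z) with hK
  have hKpos : 0 < K := div_pos (by linarith) (by linarith)
  -- key pointwise claim
  have key : ∀ n, rho (f n a) a < ε → rho (f n b) b < ε →
      rho (f n z) z ≤ K * (rho (f n a) a + rho (f n b) b) := by
    intro n hρa hρb
    have hfna : Complex.abs (f n a) < 1 := by
      simpa [Complex.norm_eq_abs] using mem_ball_zero_iff.mp (hmaps n ha)
    have hfnb : Complex.abs (f n b) < 1 := by
      simpa [Complex.norm_eq_abs] using mem_ball_zero_iff.mp (hmaps n hb)
    have hfnz : Complex.abs (f n z) < 1 := by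
      simpa [Complex.norm_eq_abs] using mem_ball_zero_iff.mp (hmaps n hz0)
    have hρa0 : 0 ≤ rho (f n a) a := rho_nonneg _ _
    have hρb0 : 0 ≤ rho (f n b) b := rho_nonneg _ _
    have hs : Complex.abs (mob a (f n a)) ≤ rho (f n a) a := by
      rw [mob_abs_symm]
      exact mob_le_rho (f n a) a hfna ha' (by linarith)
    have ht : Complex.abs (mob b (f n b)) ≤ rho (f n b) b := by
      rw [mob_abs_symm]
      exact mob_le_rho (f n b) b hfnb hb' (by linarith)
    have hs4 : Complex.abs (mob a (f n a)) ≤ (1 - Complex.abs a) / 4 := by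
      calc Complex.abs (mob a (f n a)) ≤ rho (f n a) a := hs
        _ ≤ ε := hρa.le
        _ ≤ (1 - Complex.abs a) / 4 := hεa
    have hEuc := hest (f n) (hf n) (hmaps n) hs4
    have hs0 : 0 ≤ Complex.abs (mob a (f n a)) := Complex.abs.nonneg _
    have ht0 : 0 ≤ Complex.abs (mob b (f n b)) := Complex.abs.nonneg _
    -- bound on m
    have hm_le : Complex.abs (mob z (f n z)) ≤ C * (rho (f n a) a + rho (f n b) b) / (1 - Z) := by
      have e1 : Complex.abs (mob z (f n z))
          = Complex.abs (f n z - z) / Complex.abs (1 - (starRingEnd ℂ) z * f n z) := by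
        rw [mob, map_div₀]
      have e2 : 1 - Z ≤ Complex.abs (1 - (starRingEnd ℂ) z * f n z) := by
        have := abs_one_sub_conj_ge z (f n z)
        have e3 : Z * Complex.abs (f n z) ≤ Z * 1 :=
          mul_le_mul_of_nonneg_left hfnz.le hZ0
        rw [← hZ] at this
        linarith
      have e4 : Complex.abs (f n z - z) ≤ C * (rho (f n a) a + rho (f n b) b) := by
        calc Complex.abs (f n z - z)
            ≤ C * (Complex.abs (mob a (f n a)) + Complex.abs (mob b (f n b))) := hEuc
          _ ≤ C * (rho (f n a) a + rho (f n b) b) := by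
              apply mul_le_mul_of_nonneg_left (by linarith) hCpos.le
      rw [e1]
      apply div_le_div₀ (by positivity) e4 (by linarith) e2
    have hρ_small : rho (f n a) a + rho (f n b) b ≤ 2 * ε := by linarith
    have hm_half : Complex.abs (mob z (f n z)) ≤ 1 / 2 := by
      have e5 : C * (rho (f n a) a + rho (f n b) b) / (1 - Z) ≤ C * (2 * ε) / (1 - Z) := by
        apply div_le_div₀ (by positivity)
          (mul_le_mul_of_nonneg_left hρ_small hCpos.le) (by linarith) le_rfl
      have e6 : C * (2 * ε) / (1 - Z) ≤ 1 / 2 := by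
        rw [div_le_div_iff₀ (by linarith) (by norm_num : (0:ℝ) < 2)]
        have e7 : ε * (4 * C) ≤ (1 - Z) / (4 * C) * (4 * C) :=
          mul_le_mul_of_nonneg_right hεz (by linarith)
        rw [div_mul_cancel₀ _ (by positivity : (4:ℝ) * C ≠ 0)] at e7
        nlinarith
      linarith
    have hm_half' : Complex.abs (mob (f n z) z) ≤ 1 / 2 := by
      rw [← mob_abs_symm]; exact hm_half
    calc rho (f n z) z ≤ 4 * Complex.abs (mob (f n z) z) :=
        rho_le_four_mob (f n z) z hfnz hz' hm_half'
      _ = 4 * Complex.abs (mob z (f n z)) := by rw [mob_abs_symm]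
      _ ≤ 4 * (C * (rho (f n a) a + rho (f n b) b) / (1 - Z)) := by linarith
      _ = K * (rho (f n a) a + rho (f n b) b) := by
          rw [hK]; field_simp
  -- eventually small
  have h1 := hsa.tendsto_atTop_zero
  have h2 := hsb.tendsto_atTop_zero
  have hev : ∀ᶠ n in Filter.atTop, rho (f n a) a < ε ∧ rho (f n b) b < ε :=
    (h1.eventually (eventually_lt_nhds hεpos)).and (h2.eventually (eventually_lt_nhds hεpos))
  obtain ⟨N, hN⟩ := Filter.eventually_atTop.mp hev
  refine (summable_nat_add_iff N).1 ?_
  refine Summable.of_nonneg_of_le (fun n => rho_nonneg _ _)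
    (fun n => key (n + N) (hN (n + N) (by omega)).1 (hN (n + N) (by omega)).2) ?_
  exact (((summable_nat_add_iff N).2 hsa).add ((summable_nat_add_iff N).2 hsb)).mul_left K
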